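/- In a finite cube-free median graph G, for any fixed base vertex u, every vertex w at maximum distance from u (i.e., with d(u,w) ≥ d(u,z) for all vertices z) has degree at most 2 in G. -/

import Mathlib

open SimpleGraph Finset

/-- The graph interval `I(u,v)`: vertices on shortest `(u,v)`-paths. -/
def interval {V : Type*} (G : SimpleGraph V) (u v : V) : Set V :=
  {w | G.dist u w + G.dist w v = G.dist u v}

/-- A median graph: connected, and every triple of vertices has a unique median. -/
def IsMedianGraph {V : Type*} (G : SimpleGraph V) : Prop :=
  G.Connected ∧ ∀ x y z : V, ∃! m : V,
    m ∈ interval G x y ∧ m ∈ interval G y z ∧ m ∈ interval G x z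

/-- A set of vertices is (graph) convex if it contains all intervals between its members. -/
def GraphConvex {V : Type*} (G : SimpleGraph V) (S : Set V) : Prop :=
  ∀ u ∈ S, ∀ v ∈ S, interval G u v ⊆ S

/-- A halfspace: a convex set with convex complement. -/
def IsHalfspace {V : Type*} (G : SimpleGraph V) (H : Set V) : Prop :=
  GraphConvex G H ∧ GraphConvex G Hᶜ

/-- The hypercube graph `Q_k`: vertices are `{0,1}^k`, adjacent iff they differ in exactly
one coordinate. -/
def cubeGraph (k : ℕ) : SimpleGraph (Fin k → Fin 2) :=
  SimpleGraph.fromRel (fun a b => ∃! i, a i ≠ b i)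

/-- A graph is cube-free if it has no induced subgraph isomorphic to `Q_3`. -/
def CubeFree {V : Type*} (G : SimpleGraph V) : Prop :=
  ¬ Nonempty (cubeGraph 3 ↪g G)

/-- A 4-cycle of the subgraph of `G` induced by `S`: a 4-element vertex subset of `S`
inducing a cycle of length 4. -/
def IsFourCycleIn {V : Type*} (G : SimpleGraph V) (S : Set V) (t : Finset V) : Prop :=
  (↑t : Set V) ⊆ S ∧ t.card = 4 ∧ Nonempty (G.induce (↑t : Set V) ≃g SimpleGraph.cycleGraph 4)


lemma cubeAdj3 (a b : Fin 3 → Fin 2) :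
    (cubeGraph 3).Adj a b ↔
      ((a 0 ≠ b 0 ∧ a 1 = b 1 ∧ a 2 = b 2) ∨ (a 0 = b 0 ∧ a 1 ≠ b 1 ∧ a 2 = b 2) ∨
        (a 0 = b 0 ∧ a 1 = b 1 ∧ a 2 ≠ b 2)) := by
  revert a b
  simp only [cubeGraph, SimpleGraph.fromRel_adj, ExistsUnique]
  decide

def cubeMap {V : Type*} (w x1 x2 x3 y12 y13 y23 z : V) : (Fin 3 → Fin 2) → V := fun v =>
  if v 0 = 0 then
    if v 1 = 0 then (if v 2 = 0 then w else x3)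
    else (if v 2 = 0 then x2 else y23)
  else
    if v 1 = 0 then (if v 2 = 0 then x1 else y13)
    else (if v 2 = 0 then y12 else z)

set_option maxHeartbeats 2000000 in
lemma cube_embedding {V : Type*} (G : SimpleGraph V) (w x1 x2 x3 y12 y13 y23 z : V)
    (e1 : G.Adj w x1) (e2 : G.Adj w x2) (e3 : G.Adj w x3)
    (e4 : G.Adj x1 y12) (e5 : G.Adj x2 y12) (e6 : G.Adj x1 y13) (e7 : G.Adj x3 y13)
    (e8 : G.Adj x2 y23) (e9 : G.Adj x3 y23)
    (e10 : G.Adj y12 z) (e11 : G.Adj y13 z) (e12 : G.Adj y23 z)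
    (n1 : ¬G.Adj w y12) (n2 : ¬G.Adj w y13) (n3 : ¬G.Adj w y23) (n4 : ¬G.Adj w z)
    (n5 : ¬G.Adj x1 x2) (n6 : ¬G.Adj x1 x3) (n7 : ¬G.Adj x2 x3)
    (n8 : ¬G.Adj x1 y23) (n9 : ¬G.Adj x2 y13) (n10 : ¬G.Adj x3 y12)
    (n11 : ¬G.Adj x1 z) (n12 : ¬G.Adj x2 z) (n13 : ¬G.Adj x3 z)
    (n14 : ¬G.Adj y12 y13) (n15 : ¬G.Adj y12 y23) (n16 : ¬G.Adj y13 y23)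
    (q1 : w ≠ y12) (q2 : w ≠ y13) (q3 : w ≠ y23) (q4 : w ≠ z)
    (q5 : x1 ≠ x2) (q6 : x1 ≠ x3) (q7 : x2 ≠ x3)
    (q8 : x1 ≠ y23) (q9 : x2 ≠ y13) (q10 : x3 ≠ y12)
    (q11 : x1 ≠ z) (q12 : x2 ≠ z) (q13 : x3 ≠ z)
    (q14 : y12 ≠ y13) (q15 : y12 ≠ y23) (q16 : y13 ≠ y23) :
    Nonempty (cubeGraph 3 ↪g G) := by
  have f2 : ∀ t : Fin 2, t = 0 ∨ t = 1 := by decide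
  have ext3 : ∀ a b : Fin 3 → Fin 2, a 0 = b 0 → a 1 = b 1 → a 2 = b 2 → a = b := by decide
  have s1 := e1.symm; have s2 := e2.symm; have s3 := e3.symm; have s4 := e4.symm
  have s5 := e5.symm; have s6 := e6.symm; have s7 := e7.symm; have s8 := e8.symm
  have s9 := e9.symm; have s10 := e10.symm; have s11 := e11.symm; have s12 := e12.symm
  have ns1 : ¬G.Adj y12 w := fun h => n1 h.symm
  have ns2 : ¬G.Adj y13 w := fun h => n2 h.symm
  have ns3 : ¬G.Adj y23 w := fun h => n3 h.symm
  have ns4 : ¬G.Adj z w := fun h => n4 h.symm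
  have ns5 : ¬G.Adj x2 x1 := fun h => n5 h.symm
  have ns6 : ¬G.Adj x3 x1 := fun h => n6 h.symm
  have ns7 : ¬G.Adj x3 x2 := fun h => n7 h.symm
  have ns8 : ¬G.Adj y23 x1 := fun h => n8 h.symm
  have ns9 : ¬G.Adj y13 x2 := fun h => n9 h.symm
  have ns10 : ¬G.Adj y12 x3 := fun h => n10 h.symm
  have ns11 : ¬G.Adj z x1 := fun h => n11 h.symm
  have ns12 : ¬G.Adj z x2 := fun h => n12 h.symm
  have ns13 : ¬G.Adj z x3 := fun h => n13 h.symm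
  have ns14 : ¬G.Adj y13 y12 := fun h => n14 h.symm
  have ns15 : ¬G.Adj y23 y12 := fun h => n15 h.symm
  have ns16 : ¬G.Adj y23 y13 := fun h => n16 h.symm
  have ne1 := e1.ne; have ne2 := e2.ne; have ne3 := e3.ne; have ne4 := e4.ne
  have ne5 := e5.ne; have ne6 := e6.ne; have ne7 := e7.ne; have ne8 := e8.ne
  have ne9 := e9.ne; have ne10 := e10.ne; have ne11 := e11.ne; have ne12 := e12.ne
  refine ⟨⟨⟨cubeMap w x1 x2 x3 y12 y13 y23 z, ?_⟩, ?_⟩⟩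
  · intro a b hab
    rcases f2 (a 0) with h0 | h0 <;> rcases f2 (a 1) with h1 | h1 <;>
      rcases f2 (a 2) with h2 | h2 <;>
      rcases f2 (b 0) with g0 | g0 <;> rcases f2 (b 1) with g1 | g1 <;>
      rcases f2 (b 2) with g2 | g2 <;>
      simp only [cubeMap, h0, h1, h2, g0, g1, g2, reduceIte, if_true, if_false,
        one_ne_zero, reduceCtorEq] at hab <;>
      first
        | exact ext3 a b (h0.trans g0.symm) (h1.trans g1.symm) (h2.trans g2.symm)
        | exact absurd hab (by assumption)
        | exact absurd hab.symm (by assumption)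
  · intro a b
    change G.Adj (cubeMap w x1 x2 x3 y12 y13 y23 z a) (cubeMap w x1 x2 x3 y12 y13 y23 z b) ↔ _
    rcases f2 (a 0) with h0 | h0 <;> rcases f2 (a 1) with h1 | h1 <;>
      rcases f2 (a 2) with h2 | h2 <;>
      rcases f2 (b 0) with g0 | g0 <;> rcases f2 (b 1) with g1 | g1 <;>
      rcases f2 (b 2) with g2 | g2 <;>
      simp only [Function.Embedding.coeFn_mk, cubeMap, h0, h1, h2, g0, g1, g2,
        reduceIte, cubeAdj3, ne_eq, not_true_eq_false, not_false_eq_true,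
        and_true, and_false, true_and, false_and, or_false, false_or, or_true, true_or,
        iff_true, iff_false, one_ne_zero, zero_ne_one, not_not, reduceCtorEq] <;>
      first
        | assumption
        | exact G.loopless.irrefl _

set_option maxHeartbeats 1000000 in
/-- In a finite cube-free median graph, every vertex `w` at maximum distance
from a fixed base vertex `u` has degree at most 2. -/
theorem furthest_vertex_degree_le_two {V : Type*} [Fintype V] (G : SimpleGraph V)
    (hG : IsMedianGraph G) (hcf : CubeFree G) (u w : V)
    (hmax : ∀ z : V, G.dist u z ≤ G.dist u w) :
    (G.neighborSet w).ncard ≤ 2 := by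
  classical
  by_contra hdeg
  push_neg at hdeg
  rw [Set.ncard_eq_toFinset_card'] at hdeg
  obtain ⟨x1, x2, x3, hx1, hx2, hx3, h12, h13, h23⟩ := Finset.two_lt_card_iff.mp hdeg
  rw [Set.mem_toFinset, SimpleGraph.mem_neighborSet] at hx1 hx2 hx3
  have hw1 : G.Adj w x1 := hx1
  have hw2 : G.Adj w x2 := hx2
  have hw3 : G.Adj w x3 := hx3
  obtain ⟨hconn, hmed⟩ := hG
  have dist0 : ∀ a b : V, G.dist a b = 0 ↔ a = b := fun a b => hconn.dist_eq_zero_iff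
  have tri : ∀ a b c : V, G.dist a c ≤ G.dist a b + G.dist b c := fun a b c =>
    hconn.dist_triangle
  have dcomm : ∀ a b : V, G.dist a b = G.dist b a := fun a b => SimpleGraph.dist_comm
  have mem_int : ∀ a b c : V, (b ∈ interval G a c) ↔ G.dist a b + G.dist b c = G.dist a c := by
    intro a b c; rfl
  -- no triangles
  have notri : ∀ a b c : V, G.Adj a b → G.Adj b c → G.Adj a c → False := by
    intro a b c hab hbc hac
    obtain ⟨m, ⟨hm1, hm2, hm3⟩, -⟩ := hmed a b c
    rw [mem_int] at hm1 hm2 hm3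
    rw [dist_eq_one_iff_adj.mpr hab] at hm1
    rw [dist_eq_one_iff_adj.mpr hbc] at hm2
    rw [dist_eq_one_iff_adj.mpr hac] at hm3
    have h1 : G.dist a m = 0 ∨ G.dist m b = 0 := by omega
    rcases h1 with h | h
    · have : m = a := ((dist0 a m).mp h).symm
      subst this
      rw [dcomm b m, dist_eq_one_iff_adj.mpr hab, dist_eq_one_iff_adj.mpr hac] at hm2
      omega
    · have : m = b := (dist0 m b).mp h
      subst this
      rw [dist_eq_one_iff_adj.mpr hab, dist_eq_one_iff_adj.mpr hbc] at hm3
      omega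
  set D := G.dist u w with hD
  -- level of neighbors of w
  have hlevel : ∀ x, G.Adj w x → G.dist u x + 1 = D := by
    intro x hwx
    obtain ⟨m, ⟨hm1, hm2, hm3⟩, -⟩ := hmed u x w
    rw [mem_int] at hm1 hm2 hm3
    rw [dist_eq_one_iff_adj.mpr hwx.symm] at hm2
    have h1 : G.dist x m = 0 ∨ G.dist m w = 0 := by omega
    rcases h1 with h | h
    · have : m = x := ((dist0 x m).mp h).symm
      subst this
      rw [dist_eq_one_iff_adj.mpr hwx.symm] at hm3
      exact hm3
    · have hmw : m = w := (dist0 m w).mp h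
      rw [hmw, dist_eq_one_iff_adj.mpr hwx] at hm1
      have := hmax x
      omega
  have L1 := hlevel x1 hw1
  have L2 := hlevel x2 hw2
  have L3 := hlevel x3 hw3
  -- pairwise distance 2 between distinct neighbors of w
  have hpair : ∀ x y, G.Adj w x → G.Adj w y → x ≠ y → G.dist x y = 2 := by
    intro x y hx hy hxy
    have hle : G.dist x y ≤ 2 := by
      have := tri x w y
      rw [dcomm x w, dist_eq_one_iff_adj.mpr hx, dist_eq_one_iff_adj.mpr hy] at this
      omega
    have h0 : G.dist x y ≠ 0 := fun h => hxy ((dist0 x y).mp h)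
    have h1 : G.dist x y ≠ 1 := fun h => notri w x y hx (dist_eq_one_iff_adj.mp h) hy
    omega
  -- squares below w
  have hsq : ∀ x y, G.Adj w x → G.Adj w y → x ≠ y →
      ∃ m, G.Adj x m ∧ G.Adj y m ∧ G.dist u m + 2 = D := by
    intro x y hx hy hxy
    obtain ⟨m, ⟨hm1, hm2, hm3⟩, -⟩ := hmed x y u
    rw [mem_int] at hm1 hm2 hm3
    rw [hpair x y hx hy hxy] at hm1
    rw [dcomm y u] at hm2
    rw [dcomm x u] at hm3
    have Lx := hlevel x hx
    have Ly := hlevel y hy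
    have hx0 : G.dist x m ≠ 0 := by
      intro h
      have : m = x := ((dist0 x m).mp h).symm
      subst this
      rw [dcomm y m, hpair m y hx hy hxy, dcomm m u] at hm2
      omega
    have hy0 : G.dist m y ≠ 0 := by
      intro h
      have : m = y := (dist0 m y).mp h
      subst this
      rw [hpair x m hx hy hxy, dcomm m u] at hm3
      omega
    have hx1' : G.dist x m = 1 := by omega
    have hy1' : G.dist m y = 1 := by omega
    refine ⟨m, dist_eq_one_iff_adj.mp hx1',
      dist_eq_one_iff_adj.mp (show G.dist y m = 1 by rwa [dcomm y m]), ?_⟩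
    rw [hx1', dcomm m u] at hm3
    omega
  have memI : ∀ a b c : V, G.Adj a b → G.Adj b c → G.dist a c = 2 → b ∈ interval G a c := by
    intro a b c hab hbc hac
    rw [mem_int, dist_eq_one_iff_adj.mpr hab, dist_eq_one_iff_adj.mpr hbc, hac]
  have d12 := hpair x1 x2 hw1 hw2 h12
  have d13 := hpair x1 x3 hw1 hw3 h13
  have d23 := hpair x2 x3 hw2 hw3 h23
  -- uniqueness: no vertex other than w is adjacent to all of x1 x2 x3
  have hU : ∀ a, a ≠ w → G.Adj x1 a → G.Adj x2 a → G.Adj x3 a → False := by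
    intro a haw ha1 ha2 ha3
    obtain ⟨m, -, huniq⟩ := hmed x1 x2 x3
    have hwm := huniq w ⟨memI _ _ _ hw1.symm hw2 d12, memI _ _ _ hw2.symm hw3 d23,
      memI _ _ _ hw1.symm hw3 d13⟩
    have ham := huniq a ⟨memI _ _ _ ha1 ha2.symm d12, memI _ _ _ ha2 ha3.symm d23,
      memI _ _ _ ha1 ha3.symm d13⟩
    exact haw (ham.trans hwm.symm)
  -- the three squares
  obtain ⟨y12, e4, e5, lv12⟩ := hsq x1 x2 hw1 hw2 h12
  obtain ⟨y13, e6, e7, lv13⟩ := hsq x1 x3 hw1 hw3 h13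
  obtain ⟨y23, e8, e9, lv23⟩ := hsq x2 x3 hw2 hw3 h23
  have q1 : w ≠ y12 := fun h => by rw [← h] at lv12; omega
  have q2 : w ≠ y13 := fun h => by rw [← h] at lv13; omega
  have q3 : w ≠ y23 := fun h => by rw [← h] at lv23; omega
  have q8 : x1 ≠ y23 := fun h => by rw [h] at L1; omega
  have q9 : x2 ≠ y13 := fun h => by rw [h] at L2; omega
  have q10 : x3 ≠ y12 := fun h => by rw [h] at L3; omega
  -- nonedges
  have n1 : ¬G.Adj w y12 := fun h => notri w x1 y12 hw1 e4 h
  have n2 : ¬G.Adj w y13 := fun h => notri w x1 y13 hw1 e6 h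
  have n3 : ¬G.Adj w y23 := fun h => notri w x2 y23 hw2 e8 h
  have n5 : ¬G.Adj x1 x2 := fun h => notri w x1 x2 hw1 h hw2
  have n6 : ¬G.Adj x1 x3 := fun h => notri w x1 x3 hw1 h hw3
  have n7 : ¬G.Adj x2 x3 := fun h => notri w x2 x3 hw2 h hw3
  have n8 : ¬G.Adj x1 y23 := fun h => hU y23 q3.symm h e8 e9
  have n9 : ¬G.Adj x2 y13 := fun h => hU y13 q2.symm e6 h e7
  have n10 : ¬G.Adj x3 y12 := fun h => hU y12 q1.symm e4 e5 h
  have q14 : y12 ≠ y13 := fun h => hU y12 q1.symm e4 e5 (by rw [h]; exact e7)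
  have q15 : y12 ≠ y23 := fun h => hU y12 q1.symm e4 e5 (by rw [h]; exact e9)
  have q16 : y13 ≠ y23 := fun h => hU y13 q2.symm e6 (by rw [h]; exact e8) e7
  have n14 : ¬G.Adj y12 y13 := fun h => notri x1 y12 y13 e4 h e6
  have n15 : ¬G.Adj y12 y23 := fun h => notri x2 y12 y23 e5 h e8
  have n16 : ¬G.Adj y13 y23 := fun h => notri x3 y13 y23 e7 h e9
  -- distance-2 helper
  have dyy : ∀ p q r : V, G.Adj p q → G.Adj p r → q ≠ r → ¬G.Adj q r → G.dist q r = 2 := by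
    intro p q r hpq hpr hqr hn
    have hle : G.dist q r ≤ 2 := by
      have := tri q p r
      rw [dcomm q p, dist_eq_one_iff_adj.mpr hpq, dist_eq_one_iff_adj.mpr hpr] at this
      omega
    have h0 : G.dist q r ≠ 0 := fun h => hqr ((dist0 q r).mp h)
    have h1 : G.dist q r ≠ 1 := fun h => hn (dist_eq_one_iff_adj.mp h)
    omega
  have dy1213 : G.dist y12 y13 = 2 := dyy x1 y12 y13 e4 e6 q14 n14
  have dy1223 : G.dist y12 y23 = 2 := dyy x2 y12 y23 e5 e8 q15 n15
  have dy1323 : G.dist y13 y23 = 2 := dyy x3 y13 y23 e7 e9 q16 n16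
  -- the bottom vertex z: median of the y's
  obtain ⟨z, ⟨hz1, hz2, hz3⟩, -⟩ := hmed y12 y13 y23
  rw [mem_int] at hz1 hz2 hz3
  rw [dy1213] at hz1
  rw [dy1323] at hz2
  rw [dy1223] at hz3
  have hz12 : G.dist y12 z ≠ 0 := by
    intro h
    have : z = y12 := ((dist0 y12 z).mp h).symm
    subst this
    rw [dcomm y13 z, dy1213, dy1223] at hz2
    omega
  have hz13 : G.dist z y13 ≠ 0 := by
    intro h
    have : z = y13 := (dist0 z y13).mp h
    subst this
    rw [dy1213, dy1323] at hz3
    omega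
  have hz23 : G.dist z y23 ≠ 0 := by
    intro h
    have : z = y23 := (dist0 z y23).mp h
    subst this
    rw [dy1223, dcomm z y13, dy1323] at hz1
    omega
  have ez12 : G.dist y12 z = 1 := by omega
  have ez13 : G.dist z y13 = 1 := by omega
  have ez23 : G.dist z y23 = 1 := by omega
  have e10 : G.Adj y12 z := dist_eq_one_iff_adj.mp ez12
  have e11 : G.Adj y13 z := (dist_eq_one_iff_adj.mp ez13).symm
  have e12 : G.Adj y23 z := (dist_eq_one_iff_adj.mp ez23).symm
  -- nonedges with z
  have n11 : ¬G.Adj x1 z := fun h => notri x1 y12 z e4 e10 h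
  have n12 : ¬G.Adj x2 z := fun h => notri x2 y12 z e5 e10 h
  have n13 : ¬G.Adj x3 z := fun h => notri x3 y13 z e7 e11 h
  have q4 : w ≠ z := fun h => n1 (by rw [h]; exact e10.symm)
  have q11 : x1 ≠ z := fun h => n8 (by rw [h]; exact e12.symm)
  have q12 : x2 ≠ z := fun h => n9 (by rw [h]; exact e11.symm)
  have q13 : x3 ≠ z := fun h => n10 (by rw [h]; exact e10.symm)
  have n4 : ¬G.Adj w z := by
    intro h
    obtain ⟨t, -, huniq⟩ := hmed y12 y13 w
    have dw12 : G.dist y12 w = 2 := dyy x1 y12 w e4 hw1.symm q1.symm (fun hh => n1 hh.symm)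
    have dw13 : G.dist y13 w = 2 := dyy x1 y13 w e6 hw1.symm q2.symm (fun hh => n2 hh.symm)
    have hx1t := huniq x1 ⟨memI _ _ _ e4.symm e6 dy1213, memI _ _ _ e6.symm hw1.symm dw13,
      memI _ _ _ e4.symm hw1.symm dw12⟩
    have hzt := huniq z ⟨memI _ _ _ e10 e11.symm dy1213, memI _ _ _ e11 h.symm dw13,
      memI _ _ _ e10 h.symm dw12⟩
    have hx1z : x1 = z := hx1t.trans hzt.symm
    exact n8 (by rw [hx1z]; exact e12.symm)
  exact hcf (cube_embedding G w x1 x2 x3 y12 y13 y23 z hw1 hw2 hw3 e4 e5 e6 e7 e8 e9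
    e10 e11 e12 n1 n2 n3 n4 n5 n6 n7 n8 n9 n10 n11 n12 n13 n14 n15 n16
    q1 q2 q3 q4 h12 h13 h23 q8 q9 q10 q11 q12 q13 q14 q15 q16)
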